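/- Let q₁ and q₂ be integer binary quadratic forms as in the context, let p be a prime and e₁, e₂ ≥ 0 integers. If there exists x = (x₁,x₂) ∈ ℤ² with gcd(x₁, x₂, p) = 1 such that p^{e₁} ∣ q₁(x) and p^{e₂} ∣ q₂(x), then p^{min(e₁,e₂)} divides Res(q₁,q₂). -/

import Mathlib

/-- The resolvent of two binary quadratic forms. -/
def res₂ (a₁ b₁ c₁ a₂ b₂ c₂ : ℤ) : ℤ :=
  (a₁ * c₂ - a₂ * c₁) ^ 2 - 4 * (b₁ * c₂ - b₂ * c₁) * (a₁ * b₂ - a₂ * b₁)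

/-- a common primitive zero of `q₁ mod p^{e₁}` and `q₂ mod p^{e₂}` forces
`p^{min(e₁,e₂)}` to divide the resolvent. -/
theorem stmt3 (a₁ b₁ c₁ a₂ b₂ c₂ : ℤ) (p : ℕ) (hp : p.Prime) (e₁ e₂ : ℕ)
    (hx : ∃ x : ℤ × ℤ, Nat.gcd (Int.gcd x.1 x.2) p = 1 ∧
      (p : ℤ) ^ e₁ ∣ (a₁ * x.1 ^ 2 + 2 * b₁ * x.1 * x.2 + c₁ * x.2 ^ 2) ∧
      (p : ℤ) ^ e₂ ∣ (a₂ * x.1 ^ 2 + 2 * b₂ * x.1 * x.2 + c₂ * x.2 ^ 2)) :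
    (p : ℤ) ^ min e₁ e₂ ∣ res₂ a₁ b₁ c₁ a₂ b₂ c₂ := by
  obtain ⟨⟨x, y⟩, hg, h1, h2⟩ := hx
  simp only at h1 h2 hg
  set e := min e₁ e₂ with he
  have d1 : (p : ℤ) ^ e ∣ (a₁ * x ^ 2 + 2 * b₁ * x * y + c₁ * y ^ 2) :=
    (pow_dvd_pow _ (min_le_left e₁ e₂)).trans h1
  have d2 : (p : ℤ) ^ e ∣ (a₂ * x ^ 2 + 2 * b₂ * x * y + c₂ * y ^ 2) :=
    (pow_dvd_pow _ (min_le_right e₁ e₂)).trans h2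
  have hpI : Prime (p : ℤ) := Nat.prime_iff_prime_int.mp hp
  have hnot : ¬ (p : ℤ) ∣ x ∨ ¬ (p : ℤ) ∣ y := by
    by_contra h
    push_neg at h
    obtain ⟨hx', hy'⟩ := h
    have : (p : ℤ) ∣ Int.gcd x y := Int.dvd_coe_gcd hx' hy'
    have hpg : p ∣ Int.gcd x y := Int.ofNat_dvd.mp (by exact_mod_cast this)
    have : p ∣ Nat.gcd (Int.gcd x y) p := Nat.dvd_gcd hpg dvd_rfl
    rw [hg] at this
    exact hp.one_lt.ne' (Nat.dvd_one.mp this)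
  set J : ℤ := a₁ * b₂ - a₂ * b₁ with hJ
  set K : ℤ := a₁ * c₂ - a₂ * c₁ with hK
  set L : ℤ := b₁ * c₂ - b₂ * c₁ with hL
  rcases hnot with hnx | hny
  · -- use Res * x^3 identity
    have key : res₂ a₁ b₁ c₁ a₂ b₂ c₂ * x ^ 3 =
        (-2 * L * c₂ * y + (-4 * L * b₂ + K * c₂) * x) *
          (a₁ * x ^ 2 + 2 * b₁ * x * y + c₁ * y ^ 2) +
        (2 * L * c₁ * y + (4 * L * b₁ - K * c₁) * x) *
          (a₂ * x ^ 2 + 2 * b₂ * x * y + c₂ * y ^ 2) := by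
      simp only [res₂, hJ, hK, hL]; ring
    have hd : (p : ℤ) ^ e ∣ res₂ a₁ b₁ c₁ a₂ b₂ c₂ * x ^ 3 := by
      rw [key]; exact dvd_add (d1.mul_left _) (d2.mul_left _)
    have hcop : IsCoprime ((p : ℤ) ^ e) (x ^ 3) :=
      (((hpI.coprime_iff_not_dvd).mpr hnx).pow_right).pow_left
    exact hcop.dvd_of_dvd_mul_right hd
  · have key : res₂ a₁ b₁ c₁ a₂ b₂ c₂ * y ^ 3 =
        (2 * J * a₂ * x + (4 * J * b₂ - K * a₂) * y) *
          (a₁ * x ^ 2 + 2 * b₁ * x * y + c₁ * y ^ 2) +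
        (-2 * J * a₁ * x + (K * a₁ - 4 * J * b₁) * y) *
          (a₂ * x ^ 2 + 2 * b₂ * x * y + c₂ * y ^ 2) := by
      simp only [res₂, hJ, hK, hL]; ring
    have hd : (p : ℤ) ^ e ∣ res₂ a₁ b₁ c₁ a₂ b₂ c₂ * y ^ 3 := by
      rw [key]; exact dvd_add (d1.mul_left _) (d2.mul_left _)
    have hcop : IsCoprime ((p : ℤ) ^ e) (y ^ 3) :=
      (((hpI.coprime_iff_not_dvd).mpr hny).pow_right).pow_left
    exact hcop.dvd_of_dvd_mul_right hd
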